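/- arXiv:2401.08060 — 6 statements merged into one kernel-verified Lean document; each statement's English description precedes it below -/
import Mathlib

section
/- (Three sequences lemma) Let {α_k}, {β_k}, {γ_k} be sequences of nonnegative real numbers such that α_{k+1} - α_k ≤ β_k α_k + γ_k for all sufficiently large k, {β_k} is bounded, ∑ β_k = ∞, ∑ γ_k < ∞, and ∑ β_k α_k² < ∞. Then α_k → 0 as k → ∞. -/
open Filter Topology

set_option maxHeartbeats 1000000 in
/-- Three sequences lemma. -/
theorem stmt_2 (α β γ : ℕ → ℝ)
    (hα : ∀ k, 0 ≤ α k) (hβ : ∀ k, 0 ≤ β k) (hγ : ∀ k, 0 ≤ γ k)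
    (hrec : ∀ᶠ k in atTop, α (k + 1) - α k ≤ β k * α k + γ k)
    (hβbdd : ∃ M, ∀ k, β k ≤ M)
    (hβdiv : Tendsto (fun n => ∑ k ∈ Finset.range n, β k) atTop atTop)
    (hγsum : Summable γ)
    (hβαsum : Summable (fun k => β k * (α k) ^ 2)) :
    Tendsto α atTop (𝓝 0) := by
  obtain ⟨M, hM⟩ := hβbdd
  have hM0 : 0 ≤ M := le_trans (hβ 0) (hM 0)
  -- Step 1: α gets below any ε infinitely often
  have hfreq : ∀ ε : ℝ, 0 < ε → ∃ᶠ k in atTop, α k < ε := by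
    intro ε hε
    by_contra h
    rw [Filter.not_frequently] at h
    simp only [not_lt] at h
    obtain ⟨N, hN⟩ := eventually_atTop.mp h
    have hsum : Summable β := by
      rw [← summable_nat_add_iff N]
      apply Summable.of_nonneg_of_le (fun k => hβ _) (fun k => ?_)
        (((summable_nat_add_iff N).mpr hβαsum).mul_left (1 / ε ^ 2))
      have h1 : ε ≤ α (k + N) := hN _ (Nat.le_add_left N k)
      have h2 : 0 ≤ β (k + N) := hβ _
      rw [one_div, inv_mul_eq_div, le_div_iff₀ (by positivity)]
      nlinarith [mul_le_mul_of_nonneg_left (mul_le_mul h1 h1 (le_of_lt hε) (hα _)) h2]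
    exact not_tendsto_nhds_of_tendsto_atTop hβdiv _ hsum.hasSum.tendsto_sum_nat
  -- Step 2: eventually α < c for any c > 0
  rw [Metric.tendsto_atTop]
  intro c hc
  set ε : ℝ := c / (2 * (M + 2)) with hεdef
  have hε : 0 < ε := by positivity
  obtain ⟨N₀, hN₀⟩ := eventually_atTop.mp hrec
  obtain ⟨N₁, hN₁⟩ := eventually_atTop.mp
    ((tendsto_sum_nat_add γ).eventually_lt_const (show (0:ℝ) < c / 8 by positivity))
  obtain ⟨N₂, hN₂⟩ := eventually_atTop.mp
    ((tendsto_sum_nat_add (fun k => β k * (α k) ^ 2)).eventually_lt_const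
      (show (0:ℝ) < ε * (c / 8) by positivity))
  obtain ⟨m, hm1, hm2⟩ := ((hfreq ε hε).and_eventually
    (eventually_atTop.mpr ⟨max N₀ (max N₁ N₂), fun n hn => hn⟩)).exists
  have hmN₀ : N₀ ≤ m := le_trans (le_max_left _ _) hm2
  have hmN₁ : N₁ ≤ m := le_trans (le_trans (le_max_left _ _) (le_max_right _ _)) hm2
  have hmN₂ : N₂ ≤ m := le_trans (le_trans (le_max_right _ _) (le_max_right _ _)) hm2
  set S : ℕ → ℝ := fun n => ∑ k ∈ Finset.Ico m n, (γ k + β k * (α k) ^ 2 / ε) with hSdef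
  have hS0 : ∀ n, 0 ≤ S n := by
    intro n
    apply Finset.sum_nonneg
    intro k _
    have := hγ k
    have := hβ k
    have := hα k
    positivity
  -- key induction
  have key : ∀ n, m ≤ n → (α n < ε ∨ α n ≤ ε * (1 + M) + S n) := by
    intro n hn
    induction n, hn using Nat.le_induction with
    | base => exact Or.inl hm1
    | succ n hn IH =>
      have hrec' : α (n + 1) - α n ≤ β n * α n + γ n := hN₀ n (le_trans hmN₀ hn)
      by_cases hcase : α (n + 1) < ε
      · exact Or.inl hcase
      right
      have hSsucc : S (n + 1) = S n + (γ n + β n * (α n) ^ 2 / ε) :=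
        Finset.sum_Ico_succ_top hn _
      have hβn := hβ n
      have hαn := hα n
      have hMn := hM n
      by_cases hcase2 : α n < ε
      · have hγn := hγ n
        have h1 : γ n ≤ S (n + 1) := by
          rw [hSsucc]
          have h2 : 0 ≤ β n * (α n) ^ 2 / ε := by positivity
          have := hS0 n
          linarith
        nlinarith
      · push_neg at hcase2
        rcases IH with h | h
        · linarith
        · have hkey : β n * α n ≤ β n * (α n) ^ 2 / ε := by
            rw [le_div_iff₀ hε]
            nlinarith [mul_le_mul_of_nonneg_left hcase2 (mul_nonneg hβn hαn)]
          rw [hSsucc]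
          linarith
  -- tail sum bounds
  have hSbound : ∀ n, S n ≤ c / 8 + c / 8 := by
    intro n
    have hsub : Finset.Ico m n ⊆ Finset.Ico N₁ n ∩ Finset.Ico N₂ n := by
      intro k hk
      simp only [Finset.mem_Ico, Finset.mem_inter] at hk ⊢
      exact ⟨⟨le_trans hmN₁ hk.1, hk.2⟩, ⟨le_trans hmN₂ hk.1, hk.2⟩⟩
    have hγpart : ∑ k ∈ Finset.Ico m n, γ k ≤ c / 8 := by
      have h1 : ∑ k ∈ Finset.Ico m n, γ k ≤ ∑ k ∈ Finset.Ico N₁ n, γ k := by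
        apply Finset.sum_le_sum_of_subset_of_nonneg
        · intro k hk
          simp only [Finset.mem_Ico] at hk ⊢
          exact ⟨le_trans hmN₁ hk.1, hk.2⟩
        · intro k _ _; exact hγ k
      have h2 : ∑ k ∈ Finset.Ico N₁ n, γ k ≤ ∑' k, γ (k + N₁) := by
        rw [Finset.sum_Ico_eq_sum_range]
        have hsummable : Summable fun k => γ (k + N₁) := (summable_nat_add_iff N₁).mpr hγsum
        calc ∑ k ∈ Finset.range (n - N₁), γ (N₁ + k)
            = ∑ k ∈ Finset.range (n - N₁), γ (k + N₁) := by
              apply Finset.sum_congr rfl; intro k _; rw [Nat.add_comm]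
          _ ≤ ∑' k, γ (k + N₁) := Summable.sum_le_tsum _ (fun k _ => hγ _) hsummable
      linarith [le_of_lt (hN₁ N₁ le_rfl)]
    have hβαpart : ∑ k ∈ Finset.Ico m n, β k * (α k) ^ 2 / ε ≤ c / 8 := by
      rw [← Finset.sum_div, div_le_iff₀ hε]
      have h1 : ∑ k ∈ Finset.Ico m n, β k * (α k) ^ 2
          ≤ ∑ k ∈ Finset.Ico N₂ n, β k * (α k) ^ 2 := by
        apply Finset.sum_le_sum_of_subset_of_nonneg
        · intro k hk
          simp only [Finset.mem_Ico] at hk ⊢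
          exact ⟨le_trans hmN₂ hk.1, hk.2⟩
        · intro k _ _
          have := hβ k; have := hα k; positivity
      have h2 : ∑ k ∈ Finset.Ico N₂ n, β k * (α k) ^ 2 ≤ ∑' k, β (k + N₂) * (α (k + N₂)) ^ 2 := by
        rw [Finset.sum_Ico_eq_sum_range]
        have hsummable : Summable fun k => β (k + N₂) * (α (k + N₂)) ^ 2 :=
          (summable_nat_add_iff N₂).mpr hβαsum
        calc ∑ k ∈ Finset.range (n - N₂), β (N₂ + k) * (α (N₂ + k)) ^ 2
            = ∑ k ∈ Finset.range (n - N₂), β (k + N₂) * (α (k + N₂)) ^ 2 := by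
              apply Finset.sum_congr rfl; intro k _; rw [Nat.add_comm]
          _ ≤ _ := Summable.sum_le_tsum _ (fun k _ => by have := hβ (k + N₂); have := hα (k + N₂); positivity) hsummable
      have h3 := le_of_lt (hN₂ N₂ le_rfl)
      have : ε * (c / 8) = c / 8 * ε := mul_comm _ _
      linarith
    have hsplit : S n = ∑ k ∈ Finset.Ico m n, γ k + ∑ k ∈ Finset.Ico m n, β k * (α k) ^ 2 / ε := by
      rw [hSdef, ← Finset.sum_add_distrib]
    linarith
  refine ⟨m, fun n hn => ?_⟩
  rw [Real.dist_eq, sub_zero, abs_of_nonneg (hα n)]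
  have hεc : ε * (1 + M) + (c / 8 + c / 8) < c := by
    rw [hεdef]
    rw [div_mul_eq_mul_div, div_add' _ _ _ (by positivity), div_lt_iff₀ (by positivity)]
    nlinarith
  rcases key n hn with h | h
  · calc α n < ε := h
      _ ≤ ε * (1 + M) := by nlinarith
      _ < c := by nlinarith [hS0 n, hSbound n]
  · calc α n ≤ ε * (1 + M) + S n := h
      _ ≤ ε * (1 + M) + (c / 8 + c / 8) := by linarith [hSbound n]
      _ < c := hεc
end

section
/- Under the hypotheses of the three sequences lemma (α_{k+1} - α_k ≤ β_k α_k + γ_k eventually, {β_k} bounded, ∑ β_k = ∞, ∑ γ_k < ∞, ∑ β_k α_k² < ∞, all sequences nonnegative), one has liminf_{k→∞} α_k = 0. -/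
open Filter Topology

/-- Under the hypotheses of the three sequences lemma, `liminf α_k = 0`. -/
theorem stmt_3 (α β γ : ℕ → ℝ)
    (hα : ∀ k, 0 ≤ α k) (hβ : ∀ k, 0 ≤ β k) (hγ : ∀ k, 0 ≤ γ k)
    (hrec : ∀ᶠ k in atTop, α (k + 1) - α k ≤ β k * α k + γ k)
    (hβbdd : ∃ M, ∀ k, β k ≤ M)
    (hβdiv : Tendsto (fun n => ∑ k ∈ Finset.range n, β k) atTop atTop)
    (hγsum : Summable γ)
    (hβαsum : Summable (fun k => β k * (α k) ^ 2)) :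
    liminf α atTop = 0 := by
  have key : ∀ δ : ℝ, 0 < δ → ∃ᶠ k in atTop, α k < δ := by
    intro δ hδ
    by_contra h
    rw [not_frequently] at h
    simp only [not_lt] at h
    obtain ⟨N, hN⟩ := eventually_atTop.mp h
    have hsum : Summable (fun k => δ ^ 2 * β k) := by
      rw [← summable_nat_add_iff N]
      refine Summable.of_nonneg_of_le (fun k => mul_nonneg (by positivity) (hβ _)) (fun k => ?_)
        ((summable_nat_add_iff N).mpr hβαsum)
      have h1 : δ ≤ α (k + N) := hN _ (Nat.le_add_left N k)
      have h2 : δ ^ 2 ≤ (α (k + N)) ^ 2 := pow_le_pow_left₀ (le_of_lt hδ) h1 2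
      nlinarith [hβ (k + N)]
    have hsumβ : Summable β := by
      have h3 := hsum.mul_left ((δ ^ 2)⁻¹)
      refine (summable_congr fun k => ?_).mp h3
      rw [← mul_assoc, inv_mul_cancel₀ (by positivity), one_mul]
    exact (not_summable_iff_tendsto_nat_atTop_of_nonneg hβ).mpr hβdiv hsumβ
  have hbd : IsBoundedUnder (· ≥ ·) atTop α := isBoundedUnder_of ⟨0, fun k => hα k⟩
  have hcb : IsCoboundedUnder (· ≥ ·) atTop α :=
    IsCoboundedUnder.of_frequently_le ((key 1 one_pos).mono fun k hk => le_of_lt hk)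
  have hge : (0 : ℝ) ≤ liminf α atTop := le_liminf_of_le hcb (Eventually.of_forall hα)
  have hle : liminf α atTop ≤ 0 := by
    apply le_of_forall_pos_le_add
    intro ε hε
    have := liminf_le_of_frequently_le ((key ε hε).mono fun k hk => le_of_lt hk) hbd
    linarith
  linarith
end

section
/- Let f : ℝⁿ → ℝ be differentiable satisfying the L-descent condition, and let x, g ∈ ℝⁿ, t > 0, ε ≥ 0 with ‖g - ∇f(x)‖ ≤ ε and Lt ≤ 1. Then for x⁺ = x - t g one has f(x⁺) ≤ f(x) - (t/2)(2 - Lt - ε + Ltε)‖∇f(x)‖² + tε((1 - Lt)/2 + Ltε/2). -/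
open Filter Topology RealInnerProductSpace

/-- One-step estimate for inexact gradient descent with absolute error `ε`. -/
theorem stmt_7 (n : ℕ) (f : EuclideanSpace ℝ (Fin n) → ℝ) (L : ℝ) (hL : 0 < L)
    (hdiff : Differentiable ℝ f)
    (hdesc : ∀ x y, f y ≤ f x + ⟪gradient f x, y - x⟫ + L / 2 * ‖y - x‖ ^ 2)
    (x g : EuclideanSpace ℝ (Fin n)) (t ε : ℝ) (ht : 0 < t) (hε : 0 ≤ ε)
    (hg : ‖g - gradient f x‖ ≤ ε) (hLt : L * t ≤ 1) :
    f (x - t • g) ≤ f x - t / 2 * (2 - L * t - ε + L * t * ε) * ‖gradient f x‖ ^ 2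
      + t * ε * ((1 - L * t) / 2 + L * t * ε / 2) := by
  set G := gradient f x with hG
  set e := g - G with he
  have hge : g = G + e := by simp [he]
  have hd := hdesc x (x - t • g)
  have hsub : (x - t • g) - x = -(t • g) := by abel
  rw [hsub] at hd
  have hinner : ⟪G, -(t • g)⟫ = -(t * (‖G‖ ^ 2 + ⟪G, e⟫)) := by
    rw [inner_neg_right, real_inner_smul_right, hge, inner_add_right,
      real_inner_self_eq_norm_sq]
  have hnorm : ‖-(t • g)‖ ^ 2 = t ^ 2 * (‖G‖ ^ 2 + 2 * ⟪G, e⟫ + ‖e‖ ^ 2) := by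
    rw [norm_neg, norm_smul, mul_pow, hge, norm_add_sq_real]
    rw [Real.norm_eq_abs, sq_abs]
  rw [hinner, hnorm] at hd
  have h1 : |⟪G, e⟫| ≤ ‖G‖ * ε := le_trans (abs_real_inner_le_norm G e)
    (mul_le_mul_of_nonneg_left hg (norm_nonneg G))
  have h1a := abs_le.mp h1
  have h2 : ‖e‖ ≤ ε := hg
  have h3 : (0:ℝ) ≤ ‖e‖ := norm_nonneg e
  have h4 : (0:ℝ) ≤ ‖G‖ := norm_nonneg G
  set I : ℝ := ⟪G, e⟫ with hI
  set a : ℝ := ‖G‖ with ha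
  set b : ℝ := ‖e‖ with hb
  clear_value I a b
  clear hinner hnorm hsub hdesc hdiff hg hG he hge h1
  have hnn : 0 ≤ 1 - L * t := by linarith
  have key1 : 0 ≤ t / 2 * ε * (1 - L * t) * (a - 1) ^ 2 :=
    mul_nonneg (mul_nonneg (mul_nonneg (by linarith) hε) hnn) (sq_nonneg _)
  have key2 : 0 ≤ t * (1 - L * t) * (I + ε * a) :=
    mul_nonneg (mul_nonneg ht.le hnn) (by nlinarith [h1a.1])
  have key3 : 0 ≤ L * t ^ 2 / 2 * (ε ^ 2 - b ^ 2) := by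
    have h5 : b ^ 2 ≤ ε ^ 2 := by nlinarith
    have h6 : 0 ≤ L * t ^ 2 / 2 := by positivity
    nlinarith
  linarith [key1, key2, key3, hd, mul_le_mul_of_nonneg_left h2 h3]
end

section
/- Let f : ℝⁿ → ℝ be differentiable satisfying the L-descent condition, ν ∈ [0,1), δ > 0, and let x, g ∈ ℝⁿ, t > 0 with ‖g - ∇f(x)‖ ≤ ν‖∇f(x)‖ and t ≤ (2 - 2ν - δ)/(L(1+ν)²). Then for x⁺ = x - t g one has f(x⁺) ≤ f(x) - (δ t/2)‖∇f(x)‖². -/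
open Filter Topology RealInnerProductSpace

/-- One-step sufficient decrease for inexact gradient descent with
relative error `ν`. -/
theorem stmt_9 (n : ℕ) (f : EuclideanSpace ℝ (Fin n) → ℝ) (L : ℝ) (hL : 0 < L)
    (hdiff : Differentiable ℝ f)
    (hdesc : ∀ x y, f y ≤ f x + ⟪gradient f x, y - x⟫ + L / 2 * ‖y - x‖ ^ 2)
    (ν δ : ℝ) (hν0 : 0 ≤ ν) (hν1 : ν < 1) (hδ : 0 < δ)
    (x g : EuclideanSpace ℝ (Fin n)) (t : ℝ) (ht : 0 < t)
    (hg : ‖g - gradient f x‖ ≤ ν * ‖gradient f x‖)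
    (htle : t ≤ (2 - 2 * ν - δ) / (L * (1 + ν) ^ 2)) :
    f (x - t • g) ≤ f x - δ * t / 2 * ‖gradient f x‖ ^ 2 := by
  set G := gradient f x with hG
  have key := hdesc x (x - t • g)
  have hsub : x - t • g - x = -(t • g) := by abel
  rw [hsub] at key
  have hin : ⟪G, -(t • g)⟫ = -(t * ⟪G, g⟫) := by
    rw [inner_neg_right, real_inner_smul_right]
  have hnrm : ‖-(t • g)‖ = t * ‖g‖ := by
    rw [norm_neg, norm_smul, Real.norm_eq_abs, abs_of_pos ht]
  rw [hin, hnrm] at key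
  -- inner product bound
  have hcs : |⟪G, g - G⟫| ≤ ‖G‖ * ‖g - G‖ := abs_real_inner_le_norm G (g - G)
  have hsplit : ⟪G, g - G⟫ = ⟪G, g⟫ - ‖G‖ ^ 2 := by
    rw [inner_sub_right, real_inner_self_eq_norm_sq]
  have hGnn : (0:ℝ) ≤ ‖G‖ := norm_nonneg _
  have hip : (1 - ν) * ‖G‖ ^ 2 ≤ ⟪G, g⟫ := by
    have h1 : ‖G‖ * ‖g - G‖ ≤ ν * ‖G‖ ^ 2 := by
      calc ‖G‖ * ‖g - G‖ ≤ ‖G‖ * (ν * ‖G‖) := by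
            exact mul_le_mul_of_nonneg_left hg hGnn
        _ = ν * ‖G‖ ^ 2 := by ring
    have h2 := (abs_le.mp hcs).1
    nlinarith [hsplit]
  -- norm bound
  have hgn : ‖g‖ ≤ (1 + ν) * ‖G‖ := by
    calc ‖g‖ = ‖G + (g - G)‖ := by congr 1; abel
      _ ≤ ‖G‖ + ‖g - G‖ := norm_add_le _ _
      _ ≤ ‖G‖ + ν * ‖G‖ := by linarith
      _ = (1 + ν) * ‖G‖ := by ring
  -- step size bound
  have hden : 0 < L * (1 + ν) ^ 2 := by positivity
  have hstep : t * (L * (1 + ν) ^ 2) ≤ 2 - 2 * ν - δ := by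
    rw [← le_div_iff₀ hden]; exact htle
  have hgnn : (0:ℝ) ≤ ‖g‖ := norm_nonneg _
  have hgsq : ‖g‖ ^ 2 ≤ (1 + ν) ^ 2 * ‖G‖ ^ 2 := by nlinarith
  nlinarith [key, mul_le_mul_of_nonneg_left hip ht.le, sq_nonneg t,
    mul_le_mul_of_nonneg_left hgsq (mul_pos hL (mul_pos ht ht)).le,
    mul_le_mul_of_nonneg_right hstep (mul_nonneg ht.le (sq_nonneg ‖G‖))]
end

section
/- Let f : ℝⁿ → ℝ be convex and differentiable with L-Lipschitz gradient. Let {x^k} be generated by SAM: x^{k+1} = x^k - t_k ∇f(x^k + ρ_k ∇f(x^k)/‖∇f(x^k)‖), with ∇f(x^k) ≠ 0 for all k, ∑ t_k² < ∞, ∑ t_k = ∞, sup ρ_k < ∞, and inf_k f(x^k) > -∞. Then liminf_{k→∞} ‖∇f(x^k)‖ = 0. -/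
open Filter Topology Set

section samHelpers
variable {E : Type*} [NormedAddCommGroup E] [InnerProductSpace ℝ E] [CompleteSpace E]

local notation "⟪" x ", " y "⟫" => @inner ℝ _ _ x y
lemma sam_lineDeriv (f : E → ℝ) (hdiff : Differentiable ℝ f) (a v : E) (s : ℝ) :
    HasDerivAt (fun s : ℝ => f (a + s • v)) ⟪gradient f (a + s • v), v⟫ s := by
  have h1 : HasDerivAt (fun s : ℝ => a + s • v) v s := by
    simpa using ((hasDerivAt_id s).smul_const v).const_add a
  have h2 := (hdiff (a + s • v)).hasGradientAt.hasFDerivAt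
  have := h2.comp_hasDerivAt s h1
  simpa [InnerProductSpace.toDual_apply_apply, Function.comp_def] using this

lemma sam_subgrad (f : E → ℝ) (hconv : ConvexOn ℝ Set.univ f) (hdiff : Differentiable ℝ f)
    (a y : E) : f a + ⟪gradient f a, y - a⟫ ≤ f y := by
  set v := y - a with hv
  have hg := sam_lineDeriv f hdiff a v
  have hgc : ConvexOn ℝ Set.univ (fun s : ℝ => f (a + s • v)) := by
    have := hconv.comp_affineMap (AffineMap.lineMap a y)
    have heq : ∀ s : ℝ, (f ∘ (AffineMap.lineMap a y)) s = f (a + s • v) := by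
      intro s; simp only [Function.comp_apply, AffineMap.lineMap_apply_module, hv]; congr 1; module
    refine (this.subset (subset_preimage_univ) (convex_univ)).congr ?_
    intro s _; exact heq s
  have hslope := hgc.le_slope_of_hasDerivAt (mem_univ (0:ℝ)) (mem_univ 1) one_pos (hg 0)
  rw [slope_def_field] at hslope
  simp only [zero_smul, add_zero, one_smul] at hslope
  have : a + v = y := by rw [hv]; abel
  rw [this] at hslope
  have h10 : (1:ℝ) - 0 = 1 := by norm_num
  rw [h10, div_one] at hslope
  linarith

lemma sam_gradMono (f : E → ℝ) (hconv : ConvexOn ℝ Set.univ f) (hdiff : Differentiable ℝ f)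
    (a b : E) : 0 ≤ ⟪gradient f b - gradient f a, b - a⟫ := by
  have h1 := sam_subgrad f hconv hdiff a b
  have h2 := sam_subgrad f hconv hdiff b a
  have e2 : ⟪gradient f b, a - b⟫ = -⟪gradient f b, b - a⟫ := by
    rw [← inner_neg_right]; congr 1; module
  rw [e2] at h2
  rw [inner_sub_left]
  linarith
lemma sam_descent (f : E → ℝ) (L : ℝ) (hL : 0 ≤ L) (hdiff : Differentiable ℝ f)
    (hlip : ∀ x y, ‖gradient f x - gradient f y‖ ≤ L * ‖x - y‖) (a y : E) :
    f y ≤ f a + ⟪gradient f a, y - a⟫ + L / 2 * ‖y - a‖ ^ 2 := by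
  set v := y - a with hv
  set φ : ℝ → ℝ := fun s => f (a + s • v) - s * ⟪gradient f a, v⟫ - L * s ^ 2 / 2 * ‖v‖ ^ 2 with hφ
  have hd : ∀ s, HasDerivAt φ
      (⟪gradient f (a + s • v), v⟫ - ⟪gradient f a, v⟫ - L * s * ‖v‖ ^ 2) s := by
    intro s
    have h1 := sam_lineDeriv f hdiff a v s
    have h2 : HasDerivAt (fun s : ℝ => s * ⟪gradient f a, v⟫) ⟪gradient f a, v⟫ s := by
      simpa using (hasDerivAt_id s).mul_const (⟪gradient f a, v⟫)
    have h3 : HasDerivAt (fun s : ℝ => L * s ^ 2 / 2 * ‖v‖ ^ 2) (L * s * ‖v‖ ^ 2) s := by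
      have hp : HasDerivAt (fun s : ℝ => s ^ 2) (2 * s) s := by
        simpa using hasDerivAt_pow 2 s
      have := ((hp.const_mul L).div_const 2).mul_const (‖v‖ ^ 2)
      exact this.congr_deriv (by ring)
    exact (h1.sub h2).sub h3
  have hanti : AntitoneOn φ (Set.Icc 0 1) := by
    apply antitoneOn_of_deriv_nonpos (convex_Icc 0 1)
    · exact fun s _ => ((hd s).continuousAt).continuousWithinAt
    · exact fun s _ => ((hd s).differentiableAt).differentiableWithinAt
    · intro s hs
      rw [interior_Icc] at hs
      rw [(hd s).deriv]
      have hb : ⟪gradient f (a + s • v) - gradient f a, v⟫ ≤ L * s * ‖v‖ ^ 2 := by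
        calc ⟪gradient f (a + s • v) - gradient f a, v⟫
            ≤ ‖gradient f (a + s • v) - gradient f a‖ * ‖v‖ := real_inner_le_norm _ _
          _ ≤ (L * ‖(a + s • v) - a‖) * ‖v‖ := by
              apply mul_le_mul_of_nonneg_right (hlip _ _) (norm_nonneg _)
          _ = L * s * ‖v‖ ^ 2 := by
              rw [add_sub_cancel_left, norm_smul, Real.norm_eq_abs, abs_of_pos hs.1]; ring
      rw [inner_sub_left] at hb
      linarith
  have hle := hanti (Set.left_mem_Icc.mpr zero_le_one) (Set.right_mem_Icc.mpr zero_le_one)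
    zero_le_one
  have e0 : φ 0 = f a := by simp [hφ]
  have e1 : φ 1 = f y - ⟪gradient f a, v⟫ - L / 2 * ‖v‖ ^ 2 := by
    have : a + (1:ℝ) • v = y := by rw [hv]; simp
    rw [hφ]; simp only [one_smul] at this ⊢; rw [this]; ring
  rw [e0, e1] at hle
  linarith

lemma sam_step (f : E → ℝ) (L : ℝ) (hL : 0 < L)
    (hconv : ConvexOn ℝ Set.univ f) (hdiff : Differentiable ℝ f)
    (hlip : ∀ x y, ‖gradient f x - gradient f y‖ ≤ L * ‖x - y‖)
    (a : E) (tk ρk R : ℝ) (ht : 0 ≤ tk) (hρ : 0 ≤ ρk) (hρR : ρk ≤ R)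
    (hg : gradient f a ≠ 0) (hts : L * tk ≤ 1/2) :
    f (a - tk • gradient f (a + ρk • ‖gradient f a‖⁻¹ • gradient f a))
      ≤ f a - tk / 2 * ‖gradient f a‖^2 + L^3 * R^2 * tk^2 := by
  set g := gradient f a with hgdef
  set u := ρk • ‖g‖⁻¹ • g with hu
  set g' := gradient f (a + u) with hg'def
  set y := a - tk • g' with hy
  have hdesc := sam_descent f L hL.le hdiff hlip a y
  have hyd : y - a = -(tk • g') := by rw [hy, sub_sub_cancel_left]
  have hnormu : ‖u‖ = ρk := by
    rw [hu, norm_smul, norm_smul, norm_inv, norm_norm,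
      inv_mul_cancel₀ (norm_ne_zero_iff.2 hg), Real.norm_eq_abs, abs_of_nonneg hρ, mul_one]
  have hgg' : ‖g‖^2 ≤ ⟪g, g'⟫ := by
    rcases eq_or_lt_of_le hρ with h0 | h0
    · have hu0 : u = 0 := by rw [hu, ← h0, zero_smul]
      rw [hg'def, hu0, add_zero, ← hgdef, real_inner_self_eq_norm_sq]
    · have hmono2 : 0 ≤ ρk * (‖g‖⁻¹ * ⟪g' - g, g⟫) := by
        have hmono := sam_gradMono f hconv hdiff a (a + u)
        have e : a + u - a = u := by abel
        rw [e, hu, real_inner_smul_right, real_inner_smul_right] at hmono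
        exact hmono
      have hinv : (0:ℝ) < ‖g‖⁻¹ := inv_pos.2 (norm_pos_iff.2 hg)
      have hinner : 0 ≤ ⟪g' - g, g⟫ := by
        by_contra hneg
        push_neg at hneg
        nlinarith [mul_neg_of_pos_of_neg (mul_pos h0 hinv) hneg]
      rw [inner_sub_left] at hinner
      have hc := real_inner_comm g' g
      have hs := real_inner_self_eq_norm_sq g
      linarith
  have hng' : ‖g'‖ ≤ ‖g‖ + L * R := by
    have h1 : ‖g' - g‖ ≤ L * ρk := by
      have h := hlip (a + u) a
      rwa [add_sub_cancel_left, hnormu, ← hgdef, ← hg'def] at h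
    have h2 : ‖g'‖ ≤ ‖g‖ + ‖g' - g‖ := by
      have := norm_add_le g (g' - g); simpa using this
    have h3 : L * ρk ≤ L * R := mul_le_mul_of_nonneg_left hρR hL.le
    linarith
  have hyi : ⟪g, y - a⟫ = -(tk * ⟪g, g'⟫) := by
    rw [hyd, inner_neg_right, real_inner_smul_right]
  have hyn : ‖y - a‖^2 = tk^2 * ‖g'‖^2 := by
    rw [hyd, norm_neg, norm_smul, Real.norm_eq_abs, abs_of_nonneg ht, mul_pow]
  rw [hyi, hyn] at hdesc
  have hR0 : (0:ℝ) ≤ R := le_trans hρ hρR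
  have h5 : tk^2 * ‖g'‖^2 ≤ tk^2 * (‖g‖ + L*R)^2 :=
    mul_le_mul_of_nonneg_left
      (pow_le_pow_left₀ (norm_nonneg g') hng' 2) (sq_nonneg tk)
  have h5' : L * (tk^2 * ‖g'‖^2) ≤ L * (tk^2 * (‖g‖ + L*R)^2) :=
    mul_le_mul_of_nonneg_left h5 hL.le
  have h6 : tk * ‖g‖^2 ≤ tk * ⟪g, g'⟫ := mul_le_mul_of_nonneg_left hgg' ht
  have h7 : 0 ≤ (1/2 - L*tk) * (tk * ‖g‖^2) :=
    mul_nonneg (by linarith) (mul_nonneg ht (sq_nonneg _))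
  have h8 : 0 ≤ (L/2 * tk^2) * (‖g‖ - L*R)^2 := by positivity
  nlinarith [hdesc, h5', h6, h7, h8]

end samHelpers

/-- Convergence of SAM for convex functions: `liminf ‖∇f(x^k)‖ = 0`. -/
theorem stmt_16 (n : ℕ) (f : EuclideanSpace ℝ (Fin n) → ℝ) (L : ℝ) (hL : 0 < L)
    (hconv : ConvexOn ℝ Set.univ f) (hdiff : Differentiable ℝ f)
    (hlip : ∀ x y, ‖gradient f x - gradient f y‖ ≤ L * ‖x - y‖)
    (t ρ : ℕ → ℝ) (ht0 : ∀ k, 0 ≤ t k) (hρ0 : ∀ k, 0 ≤ ρ k)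
    (x : ℕ → EuclideanSpace ℝ (Fin n))
    (hrec : ∀ k, x (k + 1) = x k - t k •
      gradient f (x k + ρ k • ‖gradient f (x k)‖⁻¹ • gradient f (x k)))
    (hne : ∀ k, gradient f (x k) ≠ 0)
    (ht2 : Summable (fun k => (t k) ^ 2))
    (htdiv : Tendsto (fun N => ∑ k ∈ Finset.range N, t k) atTop atTop)
    (hρbdd : BddAbove (Set.range ρ))
    (hbelow : BddBelow (Set.range (fun k => f (x k)))) :
    liminf (fun k => ‖gradient f (x k)‖) atTop = 0 := by
  obtain ⟨R, hR⟩ := hρbdd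
  have hRk : ∀ k, ρ k ≤ R := fun k => hR ⟨k, rfl⟩
  obtain ⟨b, hb⟩ := hbelow
  have hbk : ∀ k, b ≤ f (x k) := fun k => hb ⟨k, rfl⟩
  set C := L^3 * R^2 with hC
  have hC0 : 0 ≤ C := by
    have : (0:ℝ) ≤ R^2 := sq_nonneg R
    positivity
  have step : ∀ k, L * t k ≤ 1/2 →
      f (x (k+1)) ≤ f (x k) - t k / 2 * ‖gradient f (x k)‖^2 + C * t k^2 := by
    intro k hk
    rw [hrec k]
    exact sam_step f L hL hconv hdiff hlip (x k) (t k) (ρ k) R (ht0 k) (hρ0 k) (hRk k)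
      (hne k) hk
  have ht_small : ∀ᶠ k in atTop, L * t k ≤ 1/2 := by
    have h2 : Tendsto (fun k => (t k)^2) atTop (nhds 0) := ht2.tendsto_atTop_zero
    have hpos : (0:ℝ) < (1/(2*L))^2 := by positivity
    filter_upwards [h2.eventually (eventually_le_nhds hpos)] with k hk
    have h1 : t k ≤ 1/(2*L) := by
      exact (pow_le_pow_iff_left₀ (ht0 k) (by positivity : (0:ℝ) ≤ 1/(2*L))
        (two_ne_zero)).1 hk
    calc L * t k ≤ L * (1/(2*L)) := mul_le_mul_of_nonneg_left h1 hL.le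
      _ = 1/2 := by field_simp
  have hfreq : ∀ ε : ℝ, 0 < ε → ∃ᶠ k in atTop, ‖gradient f (x k)‖ < ε := by
    intro ε hε
    by_contra hcon
    rw [not_frequently] at hcon
    push_neg at hcon
    obtain ⟨M, hM⟩ := eventually_atTop.1 (hcon.and ht_small)
    have key : ∀ m, f (x (M + m)) ≤ f (x M)
        - ε^2/2 * ∑ j ∈ Finset.range m, t (M + j)
        + C * ∑ j ∈ Finset.range m, t (M + j)^2 := by
      intro m
      induction m with
      | zero => simp
      | succ m ih =>
        have hMm := hM (M + m) (Nat.le_add_right M m)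
        have hs := step (M + m) hMm.2
        have hε2 : ε^2 ≤ ‖gradient f (x (M+m))‖^2 :=
          pow_le_pow_left₀ hε.le hMm.1 2
        have h4 : t (M+m) / 2 * ε^2 ≤ t (M+m) / 2 * ‖gradient f (x (M+m))‖^2 :=
          mul_le_mul_of_nonneg_left hε2 (by have := ht0 (M+m); linarith)
        have hstep2 : f (x (M + m + 1)) ≤ f (x (M + m)) - t (M+m)/2 * ε^2 + C * t (M+m)^2 := by
          linarith
        have hMm1 : M + (m + 1) = (M + m) + 1 := by ring
        rw [hMm1, Finset.sum_range_succ, Finset.sum_range_succ]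
        linarith
    have hsum2 : ∀ m, ∑ j ∈ Finset.range m, t (M+j)^2 ≤ ∑' k, t k ^2 := by
      intro m
      have he := Finset.sum_Ico_eq_sum_range (f := fun k => t k ^ 2) (m := M) (n := M + m)
      rw [add_tsub_cancel_left] at he
      rw [← he]
      exact Summable.sum_le_tsum _ (fun k _ => sq_nonneg _) ht2
    set B := f (x M) - b + C * (∑' k, t k^2) with hB
    have hbound : ∀ m, ε^2/2 * ∑ j ∈ Finset.range m, t (M+j) ≤ B := by
      intro m
      have h1 := key m
      have h2 := hbk (M + m)
      have h3 : C * ∑ j ∈ Finset.range m, t (M+j)^2 ≤ C * ∑' k, t k^2 :=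
        mul_le_mul_of_nonneg_left (hsum2 m) hC0
      rw [hB]; linarith
    obtain ⟨N, hN1, hN2⟩ := ((htdiv.eventually_ge_atTop
      ((∑ k ∈ Finset.range M, t k) + (2/ε^2) * (B + 1))).and (eventually_ge_atTop M)).exists
    have hNm : N = M + (N - M) := by omega
    have hsplit : ∑ k ∈ Finset.range N, t k
        = (∑ k ∈ Finset.range M, t k) + ∑ j ∈ Finset.range (N - M), t (M + j) := by
      conv_lhs => rw [hNm]
      rw [Finset.sum_range_add]
    have hfin := hbound (N - M)
    have hε2 : (0:ℝ) < ε^2 := by positivity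
    have : (2/ε^2) * (B + 1) ≤ ∑ j ∈ Finset.range (N - M), t (M + j) := by linarith
    have h5 : ε^2/2 * ((2/ε^2) * (B + 1)) ≤ ε^2/2 * ∑ j ∈ Finset.range (N - M), t (M + j) :=
      mul_le_mul_of_nonneg_left this (by positivity)
    have h6 : ε^2/2 * ((2/ε^2) * (B + 1)) = B + 1 := by field_simp
    linarith
  rw [liminf_eq]
  have hset : {a : ℝ | ∀ᶠ k in atTop, a ≤ ‖gradient f (x k)‖} = Iic 0 := by
    ext a
    simp only [mem_setOf_eq, mem_Iic]
    constructor
    · intro h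
      by_contra ha
      push_neg at ha
      obtain ⟨k, hk1, hk2⟩ := (h.and_frequently (hfreq a ha)).exists
      linarith
    · intro h
      exact Eventually.of_forall (fun k => le_trans h (norm_nonneg _))
  rw [hset, csSup_Iic]
end

section
/- Let L > 0, C ∈ (0, 2/L), p > 0, and define t_k = 1/k and ρ_k = C if k is a perfect square, ρ_k = C/k^p otherwise. Then ∑ t_k = ∞, t_k → 0 monotonically, ∑ t_k ρ_k < ∞, and limsup ρ_k = C < 2/L, while ρ_k does not converge to 0. -/
open Filter Topology Real
open scoped Classical

/-- The parameter conditions for the general SAM framework do not force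
`ρ_k → 0`: the choice `t_k = 1/k`, `ρ_k = C` on perfect squares and
`C/k^p` otherwise (indices shifted so the `k`-th term corresponds to `k+1`). -/
theorem stmt_19 (L C p : ℝ) (hL : 0 < L) (hC0 : 0 < C) (hC : C < 2 / L) (hp : 0 < p)
    (t ρ : ℕ → ℝ)
    (ht : ∀ k : ℕ, t k = 1 / (k + 1 : ℝ))
    (hρ : ∀ k : ℕ, ρ k = if ∃ m : ℕ, k + 1 = m * m then C else C / ((k + 1 : ℝ) ^ p)) :
    Tendsto (fun n => ∑ k ∈ Finset.range n, t k) atTop atTop ∧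
      Antitone t ∧ Tendsto t atTop (𝓝 0) ∧
      Summable (fun k => t k * ρ k) ∧
      limsup ρ atTop = C ∧ C < 2 / L ∧
      ¬ Tendsto ρ atTop (𝓝 0) := by
  have hkpos : ∀ k : ℕ, (0:ℝ) < (k:ℝ) + 1 := fun k => by positivity
  have hone_le : ∀ k : ℕ, (1:ℝ) ≤ ((k:ℝ) + 1) ^ p := fun k =>
    Real.one_le_rpow (by exact_mod_cast Nat.succ_le_succ (Nat.zero_le k)) hp.le
  have hρle : ∀ k, ρ k ≤ C := by
    intro k
    rw [hρ k]
    split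
    · exact le_rfl
    · exact div_le_self hC0.le (hone_le k)
  have hsq : ∀ n : ℕ, ρ ((n+1)*(n+1) - 1) = C := by
    intro n
    rw [hρ, if_pos ⟨n+1, Nat.sub_add_cancel (Nat.mul_pos n.succ_pos n.succ_pos)⟩]
  have hfreq : ∃ᶠ k in atTop, C ≤ ρ k := by
    rw [frequently_atTop]
    intro n
    have h1 : n + 1 ≤ (n+1)*(n+1) := Nat.le_mul_of_pos_right _ n.succ_pos
    exact ⟨(n+1)*(n+1) - 1, Nat.le_sub_of_add_le h1, (hsq n).ge⟩
  refine ⟨?_, ?_, ?_, ?_, ?_, hC, ?_⟩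
  · have := Real.tendsto_sum_range_one_div_nat_succ_atTop
    refine this.congr (fun n => Finset.sum_congr rfl fun k _ => ?_)
    rw [ht k]
  · intro a b hab
    rw [ht, ht]
    apply one_div_le_one_div_of_le (hkpos a)
    have : (a:ℝ) ≤ b := by exact_mod_cast hab
    linarith
  · refine tendsto_one_div_add_atTop_nhds_zero_nat.congr fun n => (ht n).symm
  · -- Summability
    set s : ℕ → ℝ := fun k => if ∃ m : ℕ, k + 1 = m * m then C / ((k:ℝ)+1) else 0 with hs
    set r : ℕ → ℝ := fun k => if ∃ m : ℕ, k + 1 = m * m then 0 else C / (((k:ℝ)+1) ^ (1+p)) with hr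
    have hfs : ∀ k, t k * ρ k = s k + r k := by
      intro k
      rw [ht, hρ, hs, hr]
      by_cases h : ∃ m : ℕ, k + 1 = m * m
      · simp only [if_pos h]
        ring
      · simp only [if_neg h]
        rw [Real.rpow_add (hkpos k), Real.rpow_one]
        field_simp
        ring
    have hsum_s : Summable s := by
      have hinj : Function.Injective (fun m : ℕ => (m+1)*(m+1) - 1) := by
        intro a b hab
        simp only at hab
        have ha : 1 ≤ (a+1)*(a+1) := Nat.mul_pos a.succ_pos a.succ_pos
        have hb : 1 ≤ (b+1)*(b+1) := Nat.mul_pos b.succ_pos b.succ_pos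
        have h2 : (a+1)*(a+1) = (b+1)*(b+1) := by
          have h3 := congrArg (· + 1) hab
          simpa [Nat.sub_add_cancel ha, Nat.sub_add_cancel hb] using h3
        have := Nat.mul_self_inj.1 h2
        omega
      have h0 : ∀ x ∉ Set.range (fun m : ℕ => (m+1)*(m+1) - 1), s x = 0 := by
        intro x hx
        rw [hs]
        simp only
        rw [if_neg]
        rintro ⟨m, hm⟩
        rcases m with _ | m'
        · omega
        · exact hx ⟨m', Nat.sub_eq_of_eq_add hm.symm ▸ rfl⟩
      refine (hinj.summable_iff h0).1 ?_
      have h2 : Summable (fun m : ℕ => C * (1/((m:ℝ)+1)^2)) := by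
        have : Summable (fun n : ℕ => 1/(n:ℝ)^2) := by
          simpa using Real.summable_one_div_nat_rpow.2 (by norm_num : (1:ℝ) < 2)
        exact ((summable_nat_add_iff 1).2 this).mul_left C |>.congr (fun m => by push_cast; ring)
      refine h2.congr fun m => ?_
      have hm1 : (m+1)*(m+1) - 1 + 1 = (m+1)*(m+1) :=
        Nat.sub_add_cancel (Nat.mul_pos m.succ_pos m.succ_pos)
      simp only [Function.comp, hs]
      rw [if_pos ⟨m+1, hm1⟩]
      have : ((((m+1)*(m+1) - 1 : ℕ):ℝ) + 1) = ((m:ℝ)+1)^2 := by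
        have : (((m+1)*(m+1) - 1 : ℕ):ℝ) = (((m+1)*(m+1) : ℕ):ℝ) - 1 := by
          rw [Nat.cast_sub (Nat.mul_pos m.succ_pos m.succ_pos)]; norm_num
        rw [this]
        push_cast
        ring
      rw [this]
      ring
    have hsum_r : Summable r := by
      have hbig : Summable (fun k : ℕ => C * (1/(((k:ℝ)+1) ^ (1+p)))) := by
        have : Summable (fun n : ℕ => 1/(n:ℝ)^(1+p)) :=
          Real.summable_one_div_nat_rpow.2 (by linarith)
        exact (((summable_nat_add_iff 1).2 this).congr (fun k => by push_cast; ring)).mul_left C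
      refine Summable.of_nonneg_of_le (fun k => ?_) (fun k => ?_) hbig
      · rw [hr]; dsimp only
        split
        · exact le_rfl
        · positivity
      · rw [hr]; dsimp only
        have hpow : (0:ℝ) < ((k:ℝ)+1) ^ (1+p) := Real.rpow_pos_of_pos (hkpos k) _
        split
        · positivity
        · exact le_of_eq (div_eq_mul_one_div _ _)
    exact (hsum_s.add hsum_r).congr fun k => (hfs k).symm
  · apply le_antisymm
    · exact limsup_le_of_le (Filter.IsCoboundedUnder.of_frequently_ge hfreq)
        (Eventually.of_forall hρle)
    · exact le_limsup_of_frequently_le hfreq (isBoundedUnder_of ⟨C, hρle⟩)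
  · intro h
    have hev : ∀ᶠ k in atTop, ρ k < C := h (Iio_mem_nhds hC0)
    rcases (hfreq.and_eventually hev).exists with ⟨k, h1, h2⟩
    exact absurd h1 (not_le.2 h2)
end
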